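/- For all integers n ≥ m ≥ 1, the number of ordered m-forests on {1,...,n} equals (2n-m-1)! · m / ((n-m)! · 2^(n-m)). -/

import Mathlib

/-- Binary rooted trees with ℕ-labeled leaves. -/
inductive PTree : Type
  | leaf : ℕ → PTree
  | node : PTree → PTree → PTree

namespace PTree

/-- The set of leaf labels of a tree. -/
def leafSet : PTree → Finset ℕ
  | leaf x => {x}
  | node l r => leafSet l ∪ leafSet r

/-- A tree is a phylogenetic tree if at every internal node the leaf label sets of the
two subtrees are disjoint (so leaves are bijectively labeled). -/
def isPhylo : PTree → Prop
  | leaf _ => True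
  | node l r => isPhylo l ∧ isPhylo r ∧ Disjoint (leafSet l) (leafSet r)

/-- Canonical ordered representative of an isomorphism class of (unordered)
phylogenetic trees: at each internal node, the subtree containing the smallest
label comes first. -/
def canonical : PTree → Prop
  | leaf _ => True
  | node l r => canonical l ∧ canonical r ∧ (leafSet l).min < (leafSet r).min

/-- `t` represents an isomorphism class of phylogenetic trees on the taxon set `S`. -/
def isTreeOn (S : Finset ℕ) (t : PTree) : Prop :=
  isPhylo t ∧ canonical t ∧ leafSet t = S

/-- The number of leaves of a tree. -/
def numLeaves : PTree → ℕ
  | leaf _ => 1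
  | node l r => numLeaves l + numLeaves r

/-- The Colless index: sum over internal nodes of |κ(left child) − κ(right child)|. -/
def colless : PTree → ℕ
  | leaf _ => 0
  | node l r => colless l + colless r + ((numLeaves l : ℤ) - (numLeaves r : ℤ)).natAbs

/-- Product over internal nodes `v` of `1/(κ(v) − 1)`. -/
def yuleProd : PTree → ℚ
  | leaf _ => 1
  | node l r => (1 / ((numLeaves l + numLeaves r : ℕ) - 1 : ℚ)) * yuleProd l * yuleProd r

/-- The probability of a phylogenetic tree with `n` leaves under the Yule model:
`2^(n-1)/n! · ∏_{v internal} 1/(κ(v)−1)`. -/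
def yule (t : PTree) : ℚ :=
  2 ^ (numLeaves t - 1) / (Nat.factorial (numLeaves t) : ℚ) * yuleProd t

/-- The depth of the leaf labeled `x` in the tree (number of arcs from the root). -/
def depthOf (x : ℕ) : PTree → ℕ
  | leaf _ => 0
  | node l r => if x ∈ leafSet l then depthOf x l + 1 else depthOf x r + 1

/-- The Sackin index: sum of the depths of the leaves. -/
def sackin (t : PTree) : ℕ := ∑ x ∈ leafSet t, depthOf x t

/-- Sum over internal nodes `v` of the number of descendant leaves `κ(v)`. -/
def kappaSum : PTree → ℕ
  | leaf _ => 0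
  | node l r => kappaSum l + kappaSum r + (numLeaves l + numLeaves r)

/-- The number of (isomorphism classes of) phylogenetic trees on `{1,…,n}`
in which leaf `1` has depth `k`. -/
noncomputable def ckn (n k : ℕ) : ℕ :=
  Nat.card {t : PTree // isTreeOn (Finset.Icc 1 n) t ∧ depthOf 1 t = k}


-- ===== auxiliary development =====

deriving instance DecidableEq for PTree

lemma leafSet_nonempty (t : PTree) : (leafSet t).Nonempty := by
  induction t with
  | leaf x => exact ⟨x, by simp [leafSet]⟩
  | node l r ihl ihr => simp only [leafSet]; exact ihl.mono Finset.subset_union_left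

lemma one_le_numLeaves (t : PTree) : 1 ≤ numLeaves t := by
  induction t with
  | leaf x => simp [numLeaves]
  | node l r ihl ihr => simp [numLeaves]; omega

lemma card_leafSet (t : PTree) (h : isPhylo t) : (leafSet t).card = numLeaves t := by
  induction t with
  | leaf x => simp [leafSet, numLeaves]
  | node l r ihl ihr =>
    obtain ⟨hl, hr, hd⟩ := h
    simp only [leafSet, numLeaves]
    rw [Finset.card_union_of_disjoint hd, ihl hl, ihr hr]

lemma eq_leaf_of_leafSet_singleton {t : PTree} (h : isPhylo t) {x : ℕ}
    (hs : leafSet t = {x}) : t = leaf x := by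
  cases t with
  | leaf y => simp_all [leafSet]
  | node l r =>
    exfalso
    obtain ⟨hl, hr, hd⟩ := h
    have h1 : leafSet l = {x} := Finset.eq_singleton_iff_nonempty_unique_mem.2
      ⟨leafSet_nonempty l, fun y hy => by
        have : y ∈ leafSet (node l r) := by simp [leafSet, hy]
        simpa [hs] using this⟩
    have h2 : leafSet r = {x} := Finset.eq_singleton_iff_nonempty_unique_mem.2
      ⟨leafSet_nonempty r, fun y hy => by
        have : y ∈ leafSet (node l r) := by simp [leafSet, hy]
        simpa [hs] using this⟩
    have := hd (le_refl _) (by rw [h2, h1])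
    simp [h1] at this

/-- The set of clades (leaf sets of subtrees). -/
def clades : PTree → Finset (Finset ℕ)
  | leaf x => {{x}}
  | node l r => insert (leafSet l ∪ leafSet r) (clades l ∪ clades r)

lemma subset_of_mem_clades {t : PTree} {C : Finset ℕ} (h : C ∈ clades t) : C ⊆ leafSet t := by
  induction t with
  | leaf x => simp_all [clades, leafSet]
  | node l r ihl ihr =>
    simp only [clades, Finset.mem_insert, Finset.mem_union] at h
    rcases h with h | h | h
    · simp [h, leafSet]
    · exact (ihl h).trans (by simp [leafSet])
    · exact (ihr h).trans (by simp [leafSet])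

lemma nonempty_of_mem_clades {t : PTree} {C : Finset ℕ} (h : C ∈ clades t) : C.Nonempty := by
  induction t with
  | leaf x => simp_all [clades]
  | node l r ihl ihr =>
    simp only [clades, Finset.mem_insert, Finset.mem_union] at h
    rcases h with h | h | h
    · rw [h]; simpa [leafSet] using (leafSet_nonempty (node l r))
    · exact ihl h
    · exact ihr h

lemma leafSet_mem_clades (t : PTree) : leafSet t ∈ clades t := by
  cases t <;> simp [clades, leafSet]

lemma card_clades {t : PTree} (h : isPhylo t) : (clades t).card = 2 * numLeaves t - 1 := by
  induction t with
  | leaf x => simp [clades, numLeaves]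
  | node l r ihl ihr =>
    obtain ⟨hl, hr, hd⟩ := h
    have hdis : Disjoint (clades l) (clades r) := by
      rw [Finset.disjoint_left]
      intro C hCl hCr
      obtain ⟨y, hy⟩ := nonempty_of_mem_clades hCl
      exact Finset.disjoint_left.1 hd (subset_of_mem_clades hCl hy) (subset_of_mem_clades hCr hy)
    have htop : leafSet l ∪ leafSet r ∉ clades l ∪ clades r := by
      intro hmem
      rcases Finset.mem_union.1 hmem with h | h
      · obtain ⟨y, hy⟩ := leafSet_nonempty r
        have : y ∈ leafSet l := subset_of_mem_clades h (Finset.mem_union_right _ hy)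
        exact Finset.disjoint_left.1 hd this hy
      · obtain ⟨y, hy⟩ := leafSet_nonempty l
        have : y ∈ leafSet r := subset_of_mem_clades h (Finset.mem_union_left _ hy)
        exact Finset.disjoint_left.1 hd hy this
    simp only [clades, numLeaves]
    rw [Finset.card_insert_of_notMem htop, Finset.card_union_of_disjoint hdis, ihl hl, ihr hr]
    have := one_le_numLeaves l
    have := one_le_numLeaves r
    omega


lemma min'_mem_left {l r : PTree} (hc : (leafSet l).min < (leafSet r).min)
    (h : (leafSet l ∪ leafSet r).Nonempty) :
    (leafSet l ∪ leafSet r).min' h ∈ leafSet l := by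
  set a := (leafSet l ∪ leafSet r).min' h with ha
  have hmem : a ∈ leafSet l ∪ leafSet r := Finset.min'_mem _ _
  rcases Finset.mem_union.1 hmem with h1 | h1
  · exact h1
  · exfalso
    obtain ⟨y, hy⟩ := leafSet_nonempty l
    have hyne : (leafSet l).Nonempty := ⟨y, hy⟩
    have hb : (leafSet l).min' hyne ∈ leafSet l := Finset.min'_mem _ _
    have hbm : ((leafSet l).min' hyne : WithTop ℕ) = (leafSet l).min := Finset.coe_min' hyne
    have h2 : ((leafSet l).min' hyne : WithTop ℕ) < (a : WithTop ℕ) := by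
      rw [hbm]; exact lt_of_lt_of_le hc (Finset.min_le h1)
    have h3 : (leafSet l).min' hyne < a := by exact_mod_cast h2
    have h4 : a ≤ (leafSet l).min' hyne := Finset.min'_le _ _ (Finset.mem_union_left _ hb)
    omega

lemma left_clades_subset {l r : PTree} (hd : Disjoint (leafSet l) (leafSet r))
    (hc : (leafSet l).min < (leafSet r).min) (h : (leafSet l ∪ leafSet r).Nonempty)
    {C : Finset ℕ} (hC : C ∈ clades (node l r)) (hne : C ≠ leafSet l ∪ leafSet r)
    (hmin : (leafSet l ∪ leafSet r).min' h ∈ C) : C ⊆ leafSet l := by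
  have hal : (leafSet l ∪ leafSet r).min' h ∈ leafSet l := min'_mem_left hc h
  simp only [clades, Finset.mem_insert, Finset.mem_union] at hC
  rcases hC with h1 | h1 | h1
  · exact absurd h1 hne
  · exact subset_of_mem_clades h1
  · exfalso
    exact Finset.disjoint_left.1 hd hal (subset_of_mem_clades h1 hmin)

lemma leafSet_left_ne {l r : PTree} (hd : Disjoint (leafSet l) (leafSet r)) :
    leafSet l ≠ leafSet l ∪ leafSet r := by
  intro h
  obtain ⟨y, hy⟩ := leafSet_nonempty r
  exact Finset.disjoint_left.1 hd (h ▸ Finset.mem_union_right _ hy) hy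

lemma clades_filter_left {l r : PTree} (hd : Disjoint (leafSet l) (leafSet r)) :
    clades l = (clades (node l r)).filter (· ⊆ leafSet l) := by
  ext C
  simp only [Finset.mem_filter, clades, Finset.mem_insert, Finset.mem_union]
  constructor
  · intro h
    exact ⟨Or.inr (Or.inl h), subset_of_mem_clades h⟩
  · rintro ⟨h1 | h1 | h1, h2⟩
    · exfalso
      obtain ⟨y, hy⟩ := leafSet_nonempty r
      exact Finset.disjoint_left.1 hd (h2 (h1 ▸ Finset.mem_union_right _ hy)) hy
    · exact h1
    · exfalso
      obtain ⟨y, hy⟩ := nonempty_of_mem_clades h1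
      exact Finset.disjoint_left.1 hd (h2 hy) (subset_of_mem_clades h1 hy)

lemma clades_filter_right {l r : PTree} (hd : Disjoint (leafSet l) (leafSet r)) :
    clades r = (clades (node l r)).filter (· ⊆ leafSet r) := by
  ext C
  simp only [Finset.mem_filter, clades, Finset.mem_insert, Finset.mem_union]
  constructor
  · intro h
    exact ⟨Or.inr (Or.inr h), subset_of_mem_clades h⟩
  · rintro ⟨h1 | h1 | h1, h2⟩
    · exfalso
      obtain ⟨y, hy⟩ := leafSet_nonempty l
      exact Finset.disjoint_left.1 hd hy (h2 (h1 ▸ Finset.mem_union_left _ hy))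
    · exfalso
      obtain ⟨y, hy⟩ := nonempty_of_mem_clades h1
      exact Finset.disjoint_left.1 hd (subset_of_mem_clades h1 hy) (h2 hy)
    · exact h1

lemma clades_inj : ∀ (t t' : PTree), isPhylo t → canonical t → isPhylo t' → canonical t' →
    clades t = clades t' → t = t' := by
  intro t
  induction t with
  | leaf x =>
    intro t' _ _ h2 c2 hE
    cases t' with
    | leaf y =>
      have : ({x} : Finset ℕ) = {y} := by
        have : ({x} : Finset ℕ) ∈ clades (leaf y) := hE ▸ leafSet_mem_clades (leaf x)
        simpa [clades] using this
      simp_all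
    | node l' r' =>
      exfalso
      obtain ⟨hl', hr', hd'⟩ := h2
      have hml : leafSet l' ∈ clades (leaf x) := by
        rw [hE]; simp [clades, leafSet_mem_clades]
      have hmr : leafSet r' ∈ clades (leaf x) := by
        rw [hE]; simp [clades, leafSet_mem_clades]
      simp only [clades, Finset.mem_singleton] at hml hmr
      obtain ⟨y, hy⟩ := leafSet_nonempty l'
      exact Finset.disjoint_left.1 hd' hy (by rw [hmr, ← hml]; exact hy)
  | node l r ihl ihr =>
    intro t' h1 c1 h2 c2 hE
    cases t' with
    | leaf y =>
      exfalso
      obtain ⟨hl, hr, hd⟩ := h1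
      have hml : leafSet l ∈ clades (leaf y) := by
        rw [← hE]; simp [clades, leafSet_mem_clades]
      have hmr : leafSet r ∈ clades (leaf y) := by
        rw [← hE]; simp [clades, leafSet_mem_clades]
      simp only [clades, Finset.mem_singleton] at hml hmr
      obtain ⟨z, hz⟩ := leafSet_nonempty l
      exact Finset.disjoint_left.1 hd hz (by rw [hmr, ← hml]; exact hz)
    | node l' r' =>
      obtain ⟨hl, hr, hd⟩ := h1
      obtain ⟨cl, cr, hcm⟩ := c1
      obtain ⟨hl', hr', hd'⟩ := h2
      obtain ⟨cl', cr', hcm'⟩ := c2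
      -- leaf sets agree
      have hS : leafSet l ∪ leafSet r = leafSet l' ∪ leafSet r' := by
        have h1 : (leafSet l ∪ leafSet r) ∈ clades (node l' r') := by
          rw [← hE]; exact leafSet_mem_clades (node l r)
        have h2 : (leafSet l' ∪ leafSet r') ∈ clades (node l r) := by
          rw [hE]; exact leafSet_mem_clades (node l' r')
        exact le_antisymm (by simpa [leafSet] using subset_of_mem_clades h1)
          (by simpa [leafSet] using subset_of_mem_clades h2)
      have hne : (leafSet l ∪ leafSet r).Nonempty := by
        obtain ⟨y, hy⟩ := leafSet_nonempty l
        exact ⟨y, Finset.mem_union_left _ hy⟩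
      have hne' : (leafSet l' ∪ leafSet r').Nonempty := hS ▸ hne
      have hmin_eq : (leafSet l ∪ leafSet r).min' hne = (leafSet l' ∪ leafSet r').min' hne' := by
        congr 1
      -- the left leaf sets agree
      have hL : leafSet l = leafSet l' := by
        apply le_antisymm
        · apply left_clades_subset hd' hcm' hne'
          · rw [← hE]
            simp [clades, leafSet_mem_clades]
          · rw [← hS]
            exact leafSet_left_ne hd
          · rw [← hmin_eq]
            exact min'_mem_left hcm hne
        · apply left_clades_subset hd hcm hne
          · rw [hE]
            simp [clades, leafSet_mem_clades]
          · rw [hS]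
            exact leafSet_left_ne hd'
          · rw [hmin_eq]
            exact min'_mem_left hcm' hne'
      have hR : leafSet r = leafSet r' := by
        have e1 : leafSet r = (leafSet l ∪ leafSet r) \ leafSet l :=
          (Finset.union_sdiff_cancel_left hd).symm
        have e2 : leafSet r' = (leafSet l' ∪ leafSet r') \ leafSet l' :=
          (Finset.union_sdiff_cancel_left hd').symm
        rw [e1, e2, hS, hL]
      have hcl : clades l = clades l' := by
        rw [clades_filter_left hd, hE, hL, ← clades_filter_left hd']
      have hcr : clades r = clades r' := by
        rw [clades_filter_right hd, hE, hR, ← clades_filter_right hd']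
      rw [ihl l' hl cl hl' cl' hcl, ihr r' hr cr hr' cr' hcr]

-- min helpers
lemma min_lt_singleton_min {s : Finset ℕ} (hs : s.Nonempty) {x : ℕ} (h : ∀ y ∈ s, y < x) :
    s.min < ({x} : Finset ℕ).min := by
  obtain ⟨y, hy⟩ := hs
  rw [Finset.min_singleton]
  exact lt_of_le_of_lt (Finset.min_le hy) (by exact_mod_cast h y hy)

lemma min_insert_big {s : Finset ℕ} {x : ℕ} (hs : s.Nonempty) (h : ∀ y ∈ s, y < x) :
    (insert x s).min = s.min := by
  obtain ⟨y, hy⟩ := hs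
  rw [Finset.min_insert]
  exact min_eq_right (le_of_lt (lt_of_le_of_lt (Finset.min_le hy) (by exact_mod_cast h y hy)))

lemma min_erase_big {s : Finset ℕ} {x : ℕ} (h : ∀ y ∈ s, y ≠ x → y < x)
    (hne : ∃ y ∈ s, y ≠ x) : (s.erase x).min = s.min := by
  obtain ⟨y, hy, hyx⟩ := hne
  have hsne : s.Nonempty := ⟨y, hy⟩
  apply le_antisymm
  · have hm : s.min' hsne ∈ s := Finset.min'_mem _ _
    have hmne : s.min' hsne ≠ x := by
      intro hEq
      have := Finset.min'_le s y hy
      have := h y hy hyx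
      omega
    have : s.min' hsne ∈ s.erase x := Finset.mem_erase.2 ⟨hmne, hm⟩
    calc (s.erase x).min ≤ (s.min' hsne : WithTop ℕ) := Finset.min_le this
    _ = s.min := Finset.coe_min' hsne
  · apply Finset.le_min
    intro a ha
    exact Finset.min_le (Finset.mem_of_mem_erase ha)

lemma exists_ne_of_ne_singleton {s : Finset ℕ} {x : ℕ} (hs : s.Nonempty) (h : s ≠ {x}) :
    ∃ y ∈ s, y ≠ x := by
  by_contra hc
  push_neg at hc
  exact h (Finset.eq_singleton_iff_nonempty_unique_mem.2 ⟨hs, hc⟩)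

/-- Remove leaf `x` from a tree. -/
def prune (x : ℕ) : PTree → PTree
  | leaf y => leaf y
  | node l r =>
    if leafSet l = {x} then r
    else if leafSet r = {x} then l
    else if x ∈ leafSet l then node (prune x l) r else node l (prune x r)

/-- Leaf set of the sibling subtree of leaf `x`. -/
def sib (x : ℕ) : PTree → Finset ℕ
  | leaf _ => ∅
  | node l r =>
    if leafSet l = {x} then leafSet r
    else if leafSet r = {x} then leafSet l
    else if x ∈ leafSet l then sib x l else sib x r

/-- Insert leaf `x` as sibling of the subtree with leaf set `C`. -/
def graft (x : ℕ) (C : Finset ℕ) : PTree → PTree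
  | leaf y => if C = {y} then node (leaf y) (leaf x) else leaf y
  | node l r =>
    if C = leafSet l ∪ leafSet r then node (node l r) (leaf x)
    else if C ⊆ leafSet l then node (graft x C l) r
    else node l (graft x C r)

lemma graft_top (x : ℕ) (t : PTree) : graft x (leafSet t) t = node t (leaf x) := by
  cases t with
  | leaf y => simp [graft, leafSet]
  | node l r => simp [graft, leafSet]

section Graft

variable {x : ℕ}

lemma mem_clades_cases {l r : PTree} (hd : Disjoint (leafSet l) (leafSet r))
    {C : Finset ℕ} (hC : C ∈ clades (node l r)) (hne : C ≠ leafSet l ∪ leafSet r) :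
    (C ⊆ leafSet l ∧ C ∈ clades l) ∨ (¬ C ⊆ leafSet l ∧ C ∈ clades r) := by
  simp only [clades, Finset.mem_insert, Finset.mem_union] at hC
  rcases hC with h | h | h
  · exact absurd h hne
  · exact Or.inl ⟨subset_of_mem_clades h, h⟩
  · refine Or.inr ⟨?_, h⟩
    intro hsub
    obtain ⟨y, hy⟩ := nonempty_of_mem_clades h
    exact Finset.disjoint_left.1 hd (hsub hy) (subset_of_mem_clades h hy)

lemma clades_top_ne {l r : PTree} {C : Finset ℕ} (hC : C ∈ clades l) (hr : (leafSet r).Nonempty)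
    (hd : Disjoint (leafSet l) (leafSet r)) : C ≠ leafSet l ∪ leafSet r := by
  intro hEq
  obtain ⟨y, hy⟩ := hr
  exact Finset.disjoint_left.1 hd (subset_of_mem_clades hC (hEq ▸ Finset.mem_union_right _ hy)) hy

lemma leafSet_graft : ∀ {t : PTree}, isPhylo t → ∀ {C : Finset ℕ}, C ∈ clades t →
    leafSet (graft x C t) = insert x (leafSet t) := by
  intro t
  induction t with
  | leaf y =>
    intro _ C hC
    simp only [clades, Finset.mem_singleton] at hC
    subst hC
    simp only [graft, if_pos rfl, leafSet]
    ext z; simp [leafSet]; try tauto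
  | node l r ihl ihr =>
    intro h C hC
    obtain ⟨hl, hr, hd⟩ := h
    by_cases htop : C = leafSet l ∪ leafSet r
    · rw [graft, if_pos htop]
      simp only [leafSet]
      ext z; simp; try tauto
    · rcases mem_clades_cases hd hC htop with ⟨hsub, hmem⟩ | ⟨hsub, hmem⟩
      · rw [graft, if_neg htop, if_pos hsub]
        simp only [leafSet, ihl hl hmem]
        ext z; simp; try tauto
      · rw [graft, if_neg htop, if_neg hsub]
        simp only [leafSet, ihr hr hmem]
        ext z; simp; try tauto

lemma isPhylo_graft : ∀ {t : PTree}, isPhylo t → (∀ y ∈ leafSet t, y < x) →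
    ∀ {C : Finset ℕ}, C ∈ clades t → isPhylo (graft x C t) := by
  intro t
  induction t with
  | leaf y =>
    intro _ hmax C hC
    simp only [clades, Finset.mem_singleton] at hC
    subst hC
    simp only [graft, if_pos rfl, isPhylo, leafSet]
    refine ⟨trivial, trivial, ?_⟩
    have : y < x := hmax y (by simp [leafSet])
    simp [Finset.disjoint_left, leafSet]
    omega
  | node l r ihl ihr =>
    intro h hmax C hC
    obtain ⟨hl, hr, hd⟩ := h
    have hmaxl : ∀ y ∈ leafSet l, y < x := fun y hy => hmax y (by simp [leafSet, hy])
    have hmaxr : ∀ y ∈ leafSet r, y < x := fun y hy => hmax y (by simp [leafSet, hy])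
    by_cases htop : C = leafSet l ∪ leafSet r
    · rw [graft, if_pos htop]
      refine ⟨⟨hl, hr, hd⟩, trivial, ?_⟩
      simp only [leafSet, Finset.disjoint_left]
      intro a ha
      have := hmax a ha
      simp; omega
    · rcases mem_clades_cases hd hC htop with ⟨hsub, hmem⟩ | ⟨hsub, hmem⟩
      · rw [graft, if_neg htop, if_pos hsub]
        refine ⟨ihl hl hmaxl hmem, hr, ?_⟩
        rw [leafSet_graft hl hmem]
        rw [Finset.insert_eq, Finset.disjoint_union_left]
        refine ⟨?_, hd⟩
        simp only [Finset.disjoint_singleton_left]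
        intro hx
        exact absurd (hmaxr x hx) (lt_irrefl x)
      · rw [graft, if_neg htop, if_neg hsub]
        refine ⟨hl, ihr hr hmaxr hmem, ?_⟩
        rw [leafSet_graft hr hmem]
        rw [Finset.insert_eq, Finset.disjoint_union_right]
        refine ⟨?_, hd⟩
        simp only [Finset.disjoint_singleton_right]
        intro hx
        exact absurd (hmaxl x hx) (lt_irrefl x)

lemma canonical_graft : ∀ {t : PTree}, isPhylo t → canonical t → (∀ y ∈ leafSet t, y < x) →
    ∀ {C : Finset ℕ}, C ∈ clades t → canonical (graft x C t) := by
  intro t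
  induction t with
  | leaf y =>
    intro _ _ hmax C hC
    simp only [clades, Finset.mem_singleton] at hC
    subst hC
    simp only [graft, if_pos rfl, canonical]
    exact ⟨trivial, trivial, min_lt_singleton_min (leafSet_nonempty _) hmax⟩
  | node l r ihl ihr =>
    intro h hc hmax C hC
    obtain ⟨hl, hr, hd⟩ := h
    obtain ⟨cl, cr, hm⟩ := hc
    have hmaxl : ∀ y ∈ leafSet l, y < x := fun y hy => hmax y (by simp [leafSet, hy])
    have hmaxr : ∀ y ∈ leafSet r, y < x := fun y hy => hmax y (by simp [leafSet, hy])
    by_cases htop : C = leafSet l ∪ leafSet r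
    · rw [graft, if_pos htop]
      exact ⟨⟨cl, cr, hm⟩, trivial, min_lt_singleton_min (leafSet_nonempty _) hmax⟩
    · rcases mem_clades_cases hd hC htop with ⟨hsub, hmem⟩ | ⟨hsub, hmem⟩
      · rw [graft, if_neg htop, if_pos hsub]
        refine ⟨ihl hl cl hmaxl hmem, cr, ?_⟩
        rw [leafSet_graft hl hmem, min_insert_big (leafSet_nonempty _) hmaxl]
        exact hm
      · rw [graft, if_neg htop, if_neg hsub]
        refine ⟨cl, ihr hr cr hmaxr hmem, ?_⟩
        rw [leafSet_graft hr hmem, min_insert_big (leafSet_nonempty _) hmaxr]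
        exact hm

lemma leafSet_graft_ne_singleton {t : PTree} (h : isPhylo t) (hmax : ∀ y ∈ leafSet t, y < x)
    {C : Finset ℕ} (hC : C ∈ clades t) : leafSet (graft x C t) ≠ {x} := by
  rw [leafSet_graft h hC]
  intro hEq
  obtain ⟨y, hy⟩ := leafSet_nonempty t
  have : y ∈ ({x} : Finset ℕ) := hEq ▸ Finset.mem_insert_of_mem hy
  simp at this
  exact absurd (hmax y hy) (by omega)

lemma leafSet_ne_x_singleton {t : PTree} (hmax : ∀ y ∈ leafSet t, y < x) :
    leafSet t ≠ {x} := by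
  intro hEq
  obtain ⟨y, hy⟩ := leafSet_nonempty t
  have := hmax y hy
  rw [hEq] at hy
  simp at hy
  omega

lemma x_not_mem {t : PTree} (hmax : ∀ y ∈ leafSet t, y < x) : x ∉ leafSet t :=
  fun hx => absurd (hmax x hx) (lt_irrefl x)

lemma prune_graft : ∀ {t : PTree}, isPhylo t → (∀ y ∈ leafSet t, y < x) →
    ∀ {C : Finset ℕ}, C ∈ clades t → prune x (graft x C t) = t := by
  intro t
  induction t with
  | leaf y =>
    intro _ hmax C hC
    simp only [clades, Finset.mem_singleton] at hC
    subst hC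
    have hy : y < x := hmax y (by simp [leafSet])
    have hne : y ≠ x := Nat.ne_of_lt hy
    simp [graft, prune, leafSet, hne]
  | node l r ihl ihr =>
    intro h hmax C hC
    obtain ⟨hl, hr, hd⟩ := h
    have hmaxl : ∀ y ∈ leafSet l, y < x := fun y hy => hmax y (by simp [leafSet, hy])
    have hmaxr : ∀ y ∈ leafSet r, y < x := fun y hy => hmax y (by simp [leafSet, hy])
    by_cases htop : C = leafSet l ∪ leafSet r
    · rw [graft, if_pos htop, prune]
      rw [if_neg (leafSet_ne_x_singleton hmax), if_pos (show leafSet (leaf x) = {x} from rfl)]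
    · rcases mem_clades_cases hd hC htop with ⟨hsub, hmem⟩ | ⟨hsub, hmem⟩
      · rw [graft, if_neg htop, if_pos hsub, prune]
        rw [if_neg (leafSet_graft_ne_singleton hl hmaxl hmem),
          if_neg (leafSet_ne_x_singleton hmaxr),
          if_pos (by rw [leafSet_graft hl hmem]; exact Finset.mem_insert_self x _),
          ihl hl hmaxl hmem]
      · rw [graft, if_neg htop, if_neg hsub, prune]
        rw [if_neg (leafSet_ne_x_singleton hmaxl),
          if_neg (leafSet_graft_ne_singleton hr hmaxr hmem),
          if_neg (x_not_mem hmaxl), ihr hr hmaxr hmem]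

lemma sib_graft : ∀ {t : PTree}, isPhylo t → (∀ y ∈ leafSet t, y < x) →
    ∀ {C : Finset ℕ}, C ∈ clades t → sib x (graft x C t) = C := by
  intro t
  induction t with
  | leaf y =>
    intro _ hmax C hC
    simp only [clades, Finset.mem_singleton] at hC
    subst hC
    have hy : y < x := hmax y (by simp [leafSet])
    have hne : y ≠ x := Nat.ne_of_lt hy
    simp [graft, sib, leafSet, hne]
  | node l r ihl ihr =>
    intro h hmax C hC
    obtain ⟨hl, hr, hd⟩ := h
    have hmaxl : ∀ y ∈ leafSet l, y < x := fun y hy => hmax y (by simp [leafSet, hy])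
    have hmaxr : ∀ y ∈ leafSet r, y < x := fun y hy => hmax y (by simp [leafSet, hy])
    by_cases htop : C = leafSet l ∪ leafSet r
    · rw [graft, if_pos htop, sib]
      rw [if_neg (leafSet_ne_x_singleton hmax), if_pos (show leafSet (leaf x) = {x} from rfl), htop]
      rfl
    · rcases mem_clades_cases hd hC htop with ⟨hsub, hmem⟩ | ⟨hsub, hmem⟩
      · rw [graft, if_neg htop, if_pos hsub, sib]
        rw [if_neg (leafSet_graft_ne_singleton hl hmaxl hmem),
          if_neg (leafSet_ne_x_singleton hmaxr),
          if_pos (by rw [leafSet_graft hl hmem]; exact Finset.mem_insert_self x _),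
          ihl hl hmaxl hmem]
      · rw [graft, if_neg htop, if_neg hsub, sib]
        rw [if_neg (leafSet_ne_x_singleton hmaxl),
          if_neg (leafSet_graft_ne_singleton hr hmaxr hmem),
          if_neg (x_not_mem hmaxl), ihr hr hmaxr hmem]

lemma not_left_singleton {l r : PTree} (hcm : (leafSet l).min < (leafSet r).min)
    (hmax : ∀ y ∈ leafSet (node l r), y ≠ x → y < x) : leafSet l ≠ {x} := by
  intro hEq
  obtain ⟨y, hy⟩ := leafSet_nonempty r
  have hymem : y ∈ leafSet (node l r) := by simp [leafSet, hy]
  have hminl : (leafSet l).min = (x : WithTop ℕ) := by rw [hEq]; exact Finset.min_singleton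
  have h1 : (x : WithTop ℕ) < (leafSet r).min := hminl ▸ hcm
  have h2 : (leafSet r).min ≤ (y : WithTop ℕ) := Finset.min_le hy
  have hxy : x < y := by exact_mod_cast lt_of_lt_of_le h1 h2
  by_cases hyx : y = x
  · omega
  · have := hmax y hymem hyx; omega

lemma leafSet_prune : ∀ {t : PTree}, isPhylo t → canonical t →
    (∀ y ∈ leafSet t, y ≠ x → y < x) → x ∈ leafSet t → leafSet t ≠ {x} →
    leafSet (prune x t) = (leafSet t).erase x := by
  intro t
  induction t with
  | leaf y =>
    intro _ _ _ hx hne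
    simp only [leafSet, Finset.mem_singleton] at hx
    exact absurd (by rw [hx]; rfl : leafSet (leaf y) = {x}) hne
  | node l r ihl ihr =>
    intro hphy hcan hmax hx _
    obtain ⟨hl, hr, hd⟩ := hphy
    obtain ⟨cl, cr, hcm⟩ := hcan
    have hmaxl : ∀ y ∈ leafSet l, y ≠ x → y < x := fun y hy => hmax y (by simp [leafSet, hy])
    have hmaxr : ∀ y ∈ leafSet r, y ≠ x → y < x := fun y hy => hmax y (by simp [leafSet, hy])
    have hlx : leafSet l ≠ {x} := not_left_singleton hcm hmax
    rw [prune, if_neg hlx]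
    by_cases hrx : leafSet r = {x}
    · rw [if_pos hrx]
      have hxnl : x ∉ leafSet l := fun hc =>
        Finset.disjoint_left.1 hd hc (by rw [hrx]; exact Finset.mem_singleton_self x)
      simp only [leafSet, hrx]
      ext z
      simp only [Finset.mem_erase, Finset.mem_union, Finset.mem_singleton]
      constructor
      · intro hz; exact ⟨fun h => hxnl (h ▸ hz), Or.inl hz⟩
      · rintro ⟨h1, h2 | h2⟩
        · exact h2
        · exact absurd h2 h1
    · rw [if_neg hrx]
      by_cases hxl : x ∈ leafSet l
      · rw [if_pos hxl]
        have hxnr : x ∉ leafSet r := Finset.disjoint_left.1 hd hxl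
        simp only [leafSet, ihl hl cl hmaxl hxl hlx]
        ext z
        simp only [Finset.mem_erase, Finset.mem_union]
        constructor
        · rintro (⟨h1, h2⟩ | h1)
          · exact ⟨h1, Or.inl h2⟩
          · exact ⟨fun h => hxnr (h ▸ h1), Or.inr h1⟩
        · rintro ⟨h1, h2 | h2⟩
          · exact Or.inl ⟨h1, h2⟩
          · exact Or.inr h2
      · rw [if_neg hxl]
        have hxr : x ∈ leafSet r := by
          simp only [leafSet, Finset.mem_union] at hx
          tauto
        simp only [leafSet, ihr hr cr hmaxr hxr hrx]
        ext z
        simp only [Finset.mem_erase, Finset.mem_union]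
        constructor
        · rintro (h1 | ⟨h1, h2⟩)
          · exact ⟨fun h => hxl (h ▸ h1), Or.inl h1⟩
          · exact ⟨h1, Or.inr h2⟩
        · rintro ⟨h1, h2 | h2⟩
          · exact Or.inl h2
          · exact Or.inr ⟨h1, h2⟩

lemma isPhylo_prune : ∀ {t : PTree}, isPhylo t → canonical t →
    (∀ y ∈ leafSet t, y ≠ x → y < x) → x ∈ leafSet t → leafSet t ≠ {x} →
    isPhylo (prune x t) := by
  intro t
  induction t with
  | leaf y =>
    intro _ _ _ hx hne
    simp only [leafSet, Finset.mem_singleton] at hx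
    exact absurd (by rw [hx]; rfl : leafSet (leaf y) = {x}) hne
  | node l r ihl ihr =>
    intro hphy hcan hmax hx _
    obtain ⟨hl, hr, hd⟩ := hphy
    obtain ⟨cl, cr, hcm⟩ := hcan
    have hmaxl : ∀ y ∈ leafSet l, y ≠ x → y < x := fun y hy => hmax y (by simp [leafSet, hy])
    have hmaxr : ∀ y ∈ leafSet r, y ≠ x → y < x := fun y hy => hmax y (by simp [leafSet, hy])
    have hlx : leafSet l ≠ {x} := not_left_singleton hcm hmax
    rw [prune, if_neg hlx]
    by_cases hrx : leafSet r = {x}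
    · rw [if_pos hrx]; exact hl
    · rw [if_neg hrx]
      by_cases hxl : x ∈ leafSet l
      · rw [if_pos hxl]
        refine ⟨ihl hl cl hmaxl hxl hlx, hr, ?_⟩
        rw [leafSet_prune hl cl hmaxl hxl hlx]
        exact Finset.disjoint_of_subset_left (Finset.erase_subset _ _) hd
      · rw [if_neg hxl]
        have hxr : x ∈ leafSet r := by
          simp only [leafSet, Finset.mem_union] at hx
          tauto
        refine ⟨hl, ihr hr cr hmaxr hxr hrx, ?_⟩
        rw [leafSet_prune hr cr hmaxr hxr hrx]
        exact Finset.disjoint_of_subset_right (Finset.erase_subset _ _) hd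

lemma canonical_prune : ∀ {t : PTree}, isPhylo t → canonical t →
    (∀ y ∈ leafSet t, y ≠ x → y < x) → x ∈ leafSet t → leafSet t ≠ {x} →
    canonical (prune x t) := by
  intro t
  induction t with
  | leaf y =>
    intro _ _ _ hx hne
    simp only [leafSet, Finset.mem_singleton] at hx
    exact absurd (by rw [hx]; rfl : leafSet (leaf y) = {x}) hne
  | node l r ihl ihr =>
    intro hphy hcan hmax hx _
    obtain ⟨hl, hr, hd⟩ := hphy
    obtain ⟨cl, cr, hcm⟩ := hcan
    have hmaxl : ∀ y ∈ leafSet l, y ≠ x → y < x := fun y hy => hmax y (by simp [leafSet, hy])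
    have hmaxr : ∀ y ∈ leafSet r, y ≠ x → y < x := fun y hy => hmax y (by simp [leafSet, hy])
    have hlx : leafSet l ≠ {x} := not_left_singleton hcm hmax
    rw [prune, if_neg hlx]
    by_cases hrx : leafSet r = {x}
    · rw [if_pos hrx]; exact cl
    · rw [if_neg hrx]
      by_cases hxl : x ∈ leafSet l
      · rw [if_pos hxl]
        refine ⟨ihl hl cl hmaxl hxl hlx, cr, ?_⟩
        rw [leafSet_prune hl cl hmaxl hxl hlx,
          min_erase_big hmaxl (exists_ne_of_ne_singleton (leafSet_nonempty l) hlx)]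
        exact hcm
      · rw [if_neg hxl]
        have hxr : x ∈ leafSet r := by
          simp only [leafSet, Finset.mem_union] at hx
          tauto
        refine ⟨cl, ihr hr cr hmaxr hxr hrx, ?_⟩
        rw [leafSet_prune hr cr hmaxr hxr hrx,
          min_erase_big hmaxr (exists_ne_of_ne_singleton (leafSet_nonempty r) hrx)]
        exact hcm

lemma sib_mem_clades_prune : ∀ {t : PTree}, isPhylo t → canonical t →
    (∀ y ∈ leafSet t, y ≠ x → y < x) → x ∈ leafSet t → leafSet t ≠ {x} →
    sib x t ∈ clades (prune x t) := by
  intro t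
  induction t with
  | leaf y =>
    intro _ _ _ hx hne
    simp only [leafSet, Finset.mem_singleton] at hx
    exact absurd (by rw [hx]; rfl : leafSet (leaf y) = {x}) hne
  | node l r ihl ihr =>
    intro hphy hcan hmax hx _
    obtain ⟨hl, hr, hd⟩ := hphy
    obtain ⟨cl, cr, hcm⟩ := hcan
    have hmaxl : ∀ y ∈ leafSet l, y ≠ x → y < x := fun y hy => hmax y (by simp [leafSet, hy])
    have hmaxr : ∀ y ∈ leafSet r, y ≠ x → y < x := fun y hy => hmax y (by simp [leafSet, hy])
    have hlx : leafSet l ≠ {x} := not_left_singleton hcm hmax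
    rw [prune, sib, if_neg hlx, if_neg hlx]
    by_cases hrx : leafSet r = {x}
    · rw [if_pos hrx, if_pos hrx]
      exact leafSet_mem_clades l
    · rw [if_neg hrx, if_neg hrx]
      by_cases hxl : x ∈ leafSet l
      · rw [if_pos hxl, if_pos hxl, clades]
        exact Finset.mem_insert_of_mem
          (Finset.mem_union_left _ (ihl hl cl hmaxl hxl hlx))
      · rw [if_neg hxl, if_neg hxl]
        have hxr : x ∈ leafSet r := by
          simp only [leafSet, Finset.mem_union] at hx
          tauto
        rw [clades]
        exact Finset.mem_insert_of_mem
          (Finset.mem_union_right _ (ihr hr cr hmaxr hxr hrx))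

lemma graft_sib_prune : ∀ {t : PTree}, isPhylo t → canonical t →
    (∀ y ∈ leafSet t, y ≠ x → y < x) → x ∈ leafSet t → leafSet t ≠ {x} →
    graft x (sib x t) (prune x t) = t := by
  intro t
  induction t with
  | leaf y =>
    intro _ _ _ hx hne
    simp only [leafSet, Finset.mem_singleton] at hx
    exact absurd (by rw [hx]; rfl : leafSet (leaf y) = {x}) hne
  | node l r ihl ihr =>
    intro hphy hcan hmax hx _
    obtain ⟨hl, hr, hd⟩ := hphy
    obtain ⟨cl, cr, hcm⟩ := hcan
    have hmaxl : ∀ y ∈ leafSet l, y ≠ x → y < x := fun y hy => hmax y (by simp [leafSet, hy])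
    have hmaxr : ∀ y ∈ leafSet r, y ≠ x → y < x := fun y hy => hmax y (by simp [leafSet, hy])
    have hlx : leafSet l ≠ {x} := not_left_singleton hcm hmax
    rw [prune, sib, if_neg hlx, if_neg hlx]
    by_cases hrx : leafSet r = {x}
    · rw [if_pos hrx, if_pos hrx, graft_top]
      rw [eq_leaf_of_leafSet_singleton hr hrx]
    · rw [if_neg hrx, if_neg hrx]
      by_cases hxl : x ∈ leafSet l
      · rw [if_pos hxl, if_pos hxl]
        have hmem := ihl hl cl hmaxl hxl hlx
        have hsub : sib x l ⊆ leafSet (prune x l) :=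
          subset_of_mem_clades (sib_mem_clades_prune hl cl hmaxl hxl hlx)
        have hLP : leafSet (prune x l) = (leafSet l).erase x :=
          leafSet_prune hl cl hmaxl hxl hlx
        have hne1 : sib x l ≠ leafSet (prune x l) ∪ leafSet r := by
          intro hEq
          obtain ⟨y, hy⟩ := leafSet_nonempty r
          have h1 : y ∈ sib x l := hEq ▸ Finset.mem_union_right _ hy
          have h2 : y ∈ leafSet l := Finset.mem_of_mem_erase (hLP ▸ hsub h1)
          exact Finset.disjoint_left.1 hd h2 hy
        rw [graft, if_neg hne1, if_pos hsub, hmem]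
      · rw [if_neg hxl, if_neg hxl]
        have hxr : x ∈ leafSet r := by
          simp only [leafSet, Finset.mem_union] at hx
          tauto
        have hmem := ihr hr cr hmaxr hxr hrx
        have hsmem := sib_mem_clades_prune hr cr hmaxr hxr hrx
        have hsub : sib x r ⊆ leafSet (prune x r) := subset_of_mem_clades hsmem
        have hLP : leafSet (prune x r) = (leafSet r).erase x :=
          leafSet_prune hr cr hmaxr hxr hrx
        have hsubr : sib x r ⊆ leafSet r := fun z hz =>
          Finset.mem_of_mem_erase (hLP ▸ hsub hz)
        obtain ⟨w, hw⟩ := nonempty_of_mem_clades hsmem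
        have hne1 : sib x r ≠ leafSet l ∪ leafSet (prune x r) := by
          intro hEq
          obtain ⟨y, hy⟩ := leafSet_nonempty l
          have hmem2 : y ∈ sib x r := hEq ▸ Finset.mem_union_left _ hy
          exact Finset.disjoint_left.1 hd hy (hsubr hmem2)
        have hne2 : ¬ sib x r ⊆ leafSet l := by
          intro hEq
          exact Finset.disjoint_left.1 hd (hEq hw) (hsubr hw)
        rw [graft, if_neg hne1, if_neg hne2, hmem]

end Graft

/-- Forest predicate. -/
def IsForest (s : Finset ℕ) {m : ℕ} (f : Fin m → PTree) : Prop :=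
  (∀ i, isPhylo (f i) ∧ canonical (f i)) ∧
  (∀ i j, i ≠ j → Disjoint (leafSet (f i)) (leafSet (f j))) ∧
  Finset.univ.biUnion (fun i => leafSet (f i)) = s

lemma IsForest.leafSet_subset {s : Finset ℕ} {m : ℕ} {f : Fin m → PTree}
    (hf : IsForest s f) (i : Fin m) : leafSet (f i) ⊆ s := by
  rw [← hf.2.2]
  exact Finset.subset_biUnion_of_mem (fun j => leafSet (f j)) (Finset.mem_univ i)

lemma forest_finite (s : Finset ℕ) (m : ℕ) : Finite {f : Fin m → PTree // IsForest s f} := by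
  classical
  have hinj : Function.Injective (fun (f : {f : Fin m → PTree // IsForest s f}) (i : Fin m) =>
      (⟨clades (f.1 i), by
        rw [Finset.mem_powerset]
        intro C hC
        rw [Finset.mem_powerset]
        exact (subset_of_mem_clades hC).trans (f.2.leafSet_subset i)⟩ :
        {u : Finset (Finset ℕ) // u ∈ s.powerset.powerset})) := by
    intro f g hfg
    apply Subtype.ext
    funext i
    have h := congrFun hfg i
    rw [Subtype.mk.injEq] at h
    exact clades_inj _ _ (f.2.1 i).1 (f.2.1 i).2 (g.2.1 i).1 (g.2.1 i).2 h
  exact Finite.of_injective _ hinj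

noncomputable def F (s : Finset ℕ) (m : ℕ) : ℕ := Nat.card {f : Fin m → PTree // IsForest s f}

lemma F_zero {s : Finset ℕ} (hs : s.Nonempty) : F s 0 = 0 := by
  haveI : IsEmpty {f : Fin 0 → PTree // IsForest s f} := by
    constructor
    rintro ⟨f, hf⟩
    obtain ⟨y, hy⟩ := hs
    rw [← hf.2.2] at hy
    simp at hy
  exact Nat.card_of_isEmpty

lemma F_base (m : ℕ) : F (Finset.Icc 1 m) m = Nat.factorial m := by
  classical
  have hcard : Fintype.card ↥(Finset.Icc 1 m) = m := by
    rw [Fintype.card_coe, Nat.card_Icc]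
    omega
  -- the map from bijections to forests
  set B : (Fin m ≃ ↥(Finset.Icc 1 m)) → {f : Fin m → PTree // IsForest (Finset.Icc 1 m) f} :=
    fun e => ⟨fun i => leaf ((e i : ↥(Finset.Icc 1 m)) : ℕ), by
      refine ⟨fun i => ⟨trivial, trivial⟩, ?_, ?_⟩
      · intro i j hij
        simp only [leafSet, Finset.disjoint_singleton_left, Finset.mem_singleton]
        intro h
        exact hij (e.injective (Subtype.ext h))
      · ext z
        simp only [Finset.mem_biUnion, Finset.mem_univ, true_and, leafSet,
          Finset.mem_singleton]
        constructor
        · rintro ⟨i, rfl⟩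
          exact (e i).2
        · intro hz
          exact ⟨e.symm ⟨z, hz⟩, by simp⟩⟩ with hB
  have hbij : Function.Bijective B := by
    constructor
    · intro e₁ e₂ h
      apply Equiv.ext
      intro i
      have := congrFun (congrArg Subtype.val h) i
      simp only [hB] at this
      exact Subtype.ext (by injection this)
    · rintro ⟨f, hf⟩
      have hsum : ∑ i, (leafSet (f i)).card = m := by
        rw [← Finset.card_biUnion (fun i _ j _ hij => hf.2.1 i j hij), hf.2.2, Nat.card_Icc]
        omega
      have hone : ∀ i, (leafSet (f i)).card = 1 := by
        intro i
        by_contra hne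
        have h2 : 2 ≤ (leafSet (f i)).card := by
          have := Finset.card_pos.2 (leafSet_nonempty (f i))
          omega
        have hrest := Finset.card_nsmul_le_sum (Finset.univ.erase i)
          (fun j => (leafSet (f j)).card) 1 (fun j _ => Finset.card_pos.2 (leafSet_nonempty (f j)))
        simp only [smul_eq_mul, mul_one] at hrest
        have hsplit : ∑ j ∈ Finset.univ.erase i, (leafSet (f j)).card + (leafSet (f i)).card
            = ∑ j, (leafSet (f j)).card := Finset.sum_erase_add _ _ (Finset.mem_univ i)
        have hcardu : (Finset.univ.erase i).card = m - 1 := by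
          rw [Finset.card_erase_of_mem (Finset.mem_univ i), Finset.card_univ, Fintype.card_fin]
        have hm1 : 1 ≤ m := i.pos
        omega
      choose a ha using fun i => Finset.card_eq_one.1 (hone i)
      have hfa : ∀ i, f i = leaf (a i) := fun i =>
        eq_leaf_of_leafSet_singleton (hf.1 i).1 (ha i)
      have hmem : ∀ i, a i ∈ Finset.Icc 1 m := fun i =>
        hf.leafSet_subset i (by rw [ha i]; exact Finset.mem_singleton_self _)
      have hinj : Function.Injective (fun i => (⟨a i, hmem i⟩ : ↥(Finset.Icc 1 m))) := by
        intro i j hij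
        by_contra hne
        have := hf.2.1 i j hne
        rw [ha i, ha j] at this
        simp only [Subtype.mk.injEq] at hij
        rw [hij] at this
        simp at this
      have hbij2 : Function.Bijective (fun i => (⟨a i, hmem i⟩ : ↥(Finset.Icc 1 m))) := by
        rw [Fintype.bijective_iff_injective_and_card]
        exact ⟨hinj, by rw [hcard, Fintype.card_fin]⟩
      refine ⟨Equiv.ofBijective _ hbij2, ?_⟩
      apply Subtype.ext
      funext i
      simp only [hB, Equiv.ofBijective_apply]
      exact (hfa i).symm
  have e : Fin m ≃ ↥(Finset.Icc 1 m) := (Fintype.equivFinOfCardEq hcard).symm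
  rw [F, ← Nat.card_eq_of_bijective B hbij, Nat.card_eq_fintype_card, Fintype.card_equiv e,
    Fintype.card_fin]

lemma mem_Icc_succ_of_mem {N z : ℕ} (h : z ∈ Finset.Icc 1 N) : z ∈ Finset.Icc 1 (N+1) := by
  rw [Finset.mem_Icc] at *; omega

lemma IsForest.max_lt {m : ℕ} {f : Fin m → PTree} {N : ℕ}
    (hf : IsForest (Finset.Icc 1 N) f) (i : Fin m) : ∀ y ∈ leafSet (f i), y < N + 1 := by
  intro y hy
  have := hf.leafSet_subset i hy
  rw [Finset.mem_Icc] at this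
  omega

lemma IsForest.x_not_mem' {m : ℕ} {f : Fin m → PTree} {N : ℕ}
    (hf : IsForest (Finset.Icc 1 N) f) (i : Fin m) : (N + 1) ∉ leafSet (f i) :=
  fun h => lt_irrefl _ (hf.max_lt i _ h)

lemma isForest_update {N k : ℕ} {f : Fin (k+1) → PTree} (hf : IsForest (Finset.Icc 1 N) f)
    (i : Fin (k+1)) {C : Finset ℕ} (hC : C ∈ clades (f i)) :
    IsForest (Finset.Icc 1 (N+1)) (Function.update f i (graft (N+1) C (f i))) := by
  classical
  refine ⟨?_, ?_, ?_⟩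
  · intro j
    rcases eq_or_ne j i with rfl | hj
    · rw [Function.update_self]
      exact ⟨isPhylo_graft (hf.1 j).1 (hf.max_lt j) hC,
        canonical_graft (hf.1 j).1 (hf.1 j).2 (hf.max_lt j) hC⟩
    · rw [Function.update_of_ne hj]
      exact hf.1 j
  · intro a b hab
    rcases eq_or_ne a i with rfl | ha
    · rw [Function.update_self, Function.update_of_ne (Ne.symm hab),
        leafSet_graft (hf.1 a).1 hC, Finset.insert_eq, Finset.disjoint_union_left]
      exact ⟨by simp [hf.x_not_mem' b], hf.2.1 a b hab⟩
    · rcases eq_or_ne b i with rfl | hb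
      · rw [Function.update_self, Function.update_of_ne ha,
          leafSet_graft (hf.1 b).1 hC, Finset.insert_eq, Finset.disjoint_union_right]
        exact ⟨by simp [hf.x_not_mem' a], hf.2.1 a b hab⟩
      · rw [Function.update_of_ne ha, Function.update_of_ne hb]
        exact hf.2.1 a b hab
  · ext z
    simp only [Finset.mem_biUnion, Finset.mem_univ, true_and]
    constructor
    · rintro ⟨j, hz⟩
      rcases eq_or_ne j i with rfl | hj
      · rw [Function.update_self, leafSet_graft (hf.1 j).1 hC] at hz
        rcases Finset.mem_insert.1 hz with rfl | hz
        · rw [Finset.mem_Icc]; omega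
        · exact mem_Icc_succ_of_mem (hf.leafSet_subset j hz)
      · rw [Function.update_of_ne hj] at hz
        exact mem_Icc_succ_of_mem (hf.leafSet_subset j hz)
    · intro hz
      rw [Finset.mem_Icc] at hz
      by_cases hzN : z ≤ N
      · have : z ∈ Finset.Icc 1 N := Finset.mem_Icc.2 ⟨hz.1, hzN⟩
        rw [← hf.2.2] at this
        simp only [Finset.mem_biUnion, Finset.mem_univ, true_and] at this
        obtain ⟨j, hj⟩ := this
        refine ⟨j, ?_⟩
        rcases eq_or_ne j i with rfl | hne
        · rw [Function.update_self, leafSet_graft (hf.1 j).1 hC]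
          exact Finset.mem_insert_of_mem hj
        · rw [Function.update_of_ne hne]
          exact hj
      · have hzx : z = N + 1 := by omega
        refine ⟨i, ?_⟩
        rw [Function.update_self, leafSet_graft (hf.1 i).1 hC, hzx]
        exact Finset.mem_insert_self _ _

lemma isForest_insertNth {N k : ℕ} {g : Fin k → PTree} (hg : IsForest (Finset.Icc 1 N) g)
    (i : Fin (k+1)) : IsForest (Finset.Icc 1 (N+1)) (Fin.insertNth (α := fun _ => PTree) i (leaf (N+1)) g) := by
  classical
  have happ : ∀ (a : Fin k), Fin.insertNth (α := fun _ => PTree) i (leaf (N+1)) g (i.succAbove a) = g a :=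
    fun a => by simp
  have happi : Fin.insertNth (α := fun _ => PTree) i (leaf (N+1)) g i = leaf (N+1) := by simp
  refine ⟨?_, ?_, ?_⟩
  · intro j
    rcases eq_or_ne j i with rfl | hj
    · rw [happi]; exact ⟨trivial, trivial⟩
    · obtain ⟨a, rfl⟩ := Fin.exists_succAbove_eq hj
      rw [happ]; exact hg.1 a
  · intro a b hab
    rcases eq_or_ne a i with rfl | ha
    · obtain ⟨b', rfl⟩ := Fin.exists_succAbove_eq (Ne.symm hab)
      rw [happi, happ]
      simp only [leafSet, Finset.disjoint_singleton_left]
      exact hg.x_not_mem' b'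
    · obtain ⟨a', rfl⟩ := Fin.exists_succAbove_eq ha
      rcases eq_or_ne b i with rfl | hb
      · rw [happi, happ]
        simp only [leafSet, Finset.disjoint_singleton_right]
        exact hg.x_not_mem' a'
      · obtain ⟨b', rfl⟩ := Fin.exists_succAbove_eq hb
        rw [happ, happ]
        exact hg.2.1 a' b' (fun h => hab (by rw [h]))
  · ext z
    simp only [Finset.mem_biUnion, Finset.mem_univ, true_and]
    constructor
    · rintro ⟨j, hz⟩
      rcases eq_or_ne j i with rfl | hj
      · rw [happi] at hz
        simp only [leafSet, Finset.mem_singleton] at hz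
        rw [hz, Finset.mem_Icc]; omega
      · obtain ⟨a, rfl⟩ := Fin.exists_succAbove_eq hj
        rw [happ] at hz
        exact mem_Icc_succ_of_mem (hg.leafSet_subset a hz)
    · intro hz
      rw [Finset.mem_Icc] at hz
      by_cases hzN : z ≤ N
      · have : z ∈ Finset.Icc 1 N := Finset.mem_Icc.2 ⟨hz.1, hzN⟩
        rw [← hg.2.2] at this
        simp only [Finset.mem_biUnion, Finset.mem_univ, true_and] at this
        obtain ⟨a, hj⟩ := this
        exact ⟨i.succAbove a, by rw [happ]; exact hj⟩
      · refine ⟨i, ?_⟩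
        rw [happi]
        simp only [leafSet, Finset.mem_singleton]
        omega

lemma nat_card_sigma {ι : Type} [Fintype ι] (β : ι → Type) [∀ i, Finite (β i)] :
    Nat.card (Σ i, β i) = ∑ i, Nat.card (β i) := by
  haveI := fun i => Fintype.ofFinite (β i)
  simp only [Nat.card_eq_fintype_card]
  exact Fintype.card_sigma

lemma F_rec (N k : ℕ) (hk : k + 1 ≤ N) :
    F (Finset.Icc 1 (N+1)) (k+1) =
      F (Finset.Icc 1 N) (k+1) * (2*N - (k+1)) + F (Finset.Icc 1 N) k * (k+1) := by
  classical
  haveI hFin1 : Finite {f : Fin (k+1) → PTree // IsForest (Finset.Icc 1 N) f} := forest_finite _ _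
  haveI hFin2 : Finite {g : Fin k → PTree // IsForest (Finset.Icc 1 N) g} := forest_finite _ _
  haveI hFin3 : Finite {f : Fin (k+1) → PTree // IsForest (Finset.Icc 1 (N+1)) f} :=
    forest_finite _ _
  set x := N + 1 with hxdef
  let A := (Σ p : ({f : Fin (k+1) → PTree // IsForest (Finset.Icc 1 N) f} × Fin (k+1)),
    {C : Finset ℕ // C ∈ clades (p.1.1 p.2)})
  let Bt := (Fin (k+1) × {g : Fin k → PTree // IsForest (Finset.Icc 1 N) g})
  let Φ : A ⊕ Bt → {f : Fin (k+1) → PTree // IsForest (Finset.Icc 1 (N+1)) f} := fun z =>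
    match z with
    | Sum.inl ⟨p, C⟩ =>
        ⟨Function.update p.1.1 p.2 (graft x C.1 (p.1.1 p.2)), isForest_update p.1.2 p.2 C.2⟩
    | Sum.inr ⟨i, g⟩ =>
        ⟨Fin.insertNth (α := fun _ => PTree) i (leaf x) g.1, isForest_insertNth g.2 i⟩
  have hbij : Function.Bijective Φ := by
    constructor
    · rintro (⟨⟨⟨f₁, hf₁⟩, i₁⟩, ⟨C₁, hC₁⟩⟩ | ⟨i₁, ⟨g₁, hg₁⟩⟩)
        (⟨⟨⟨f₂, hf₂⟩, i₂⟩, ⟨C₂, hC₂⟩⟩ | ⟨i₂, ⟨g₂, hg₂⟩⟩) h <;>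
        (have hv := congrArg Subtype.val h; dsimp only [Φ] at hv)
      · -- inl inl
        obtain rfl : i₁ = i₂ := by
          by_contra hne
          have hx1 : x ∈ leafSet (Function.update f₁ i₁ (graft x C₁ (f₁ i₁)) i₁) := by
            rw [Function.update_self, leafSet_graft (hf₁.1 i₁).1 hC₁]
            exact Finset.mem_insert_self _ _
          rw [hv, Function.update_of_ne hne] at hx1
          exact hf₂.x_not_mem' i₁ hx1
        have hTT : graft x C₁ (f₁ i₁) = graft x C₂ (f₂ i₁) := by
          have := congrFun hv i₁
          rwa [Function.update_self, Function.update_self] at this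
        obtain rfl : f₁ = f₂ := by
          funext j
          rcases eq_or_ne j i₁ with rfl | hj
          · have h1 := prune_graft (hf₁.1 j).1 (hf₁.max_lt j) hC₁
            have h2 := prune_graft (hf₂.1 j).1 (hf₂.max_lt j) hC₂
            rw [← h1, ← h2, hTT]
          · have := congrFun hv j
            rwa [Function.update_of_ne hj, Function.update_of_ne hj] at this
        obtain rfl : C₁ = C₂ := by
          have h1 := sib_graft (hf₁.1 i₁).1 (hf₁.max_lt i₁) hC₁
          have h2 := sib_graft (hf₁.1 i₁).1 (hf₁.max_lt i₁) hC₂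
          rw [← h1, ← h2, hTT]
        rfl
      · -- inl inr
        exfalso
        rcases eq_or_ne i₁ i₂ with rfl | hne
        · have := congrFun hv i₁
          rw [Function.update_self, Fin.insertNth_apply_same] at this
          exact leafSet_graft_ne_singleton (hf₁.1 i₁).1 (hf₁.max_lt i₁) hC₁
            (by rw [this]; rfl)
        · obtain ⟨a, ha⟩ := Fin.exists_succAbove_eq hne
          have := congrFun hv i₁
          rw [Function.update_self, ← ha, Fin.insertNth_apply_succAbove] at this
          have hx1 : x ∈ leafSet (graft x C₁ (f₁ i₁)) := by
            rw [leafSet_graft (hf₁.1 i₁).1 hC₁]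
            exact Finset.mem_insert_self _ _
          rw [← ha, this] at hx1
          exact hg₂.x_not_mem' a hx1
      · -- inr inl
        exfalso
        rcases eq_or_ne i₂ i₁ with rfl | hne
        · have := congrFun hv i₂
          rw [Function.update_self, Fin.insertNth_apply_same] at this
          exact leafSet_graft_ne_singleton (hf₂.1 i₂).1 (hf₂.max_lt i₂) hC₂
            (by rw [← this]; rfl)
        · obtain ⟨a, ha⟩ := Fin.exists_succAbove_eq hne
          have := congrFun hv i₂
          rw [Function.update_self, ← ha, Fin.insertNth_apply_succAbove] at this
          have hx1 : x ∈ leafSet (graft x C₂ (f₂ i₂)) := by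
            rw [leafSet_graft (hf₂.1 i₂).1 hC₂]
            exact Finset.mem_insert_self _ _
          rw [← ha, ← this] at hx1
          exact hg₁.x_not_mem' a hx1
      · -- inr inr
        obtain rfl : i₁ = i₂ := by
          by_contra hne
          obtain ⟨a, ha⟩ := Fin.exists_succAbove_eq hne
          have := congrFun hv i₁
          rw [Fin.insertNth_apply_same, ← ha, Fin.insertNth_apply_succAbove] at this
          have hx1 : x ∈ leafSet (g₂ a) := by
            rw [← this]; simp [leafSet]
          exact hg₂.x_not_mem' a hx1
        obtain rfl : g₁ = g₂ := by
          funext a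
          have := congrFun hv (i₁.succAbove a)
          rwa [Fin.insertNth_apply_succAbove, Fin.insertNth_apply_succAbove] at this
        rfl
    · rintro ⟨h, hh⟩
      have hxmem : x ∈ Finset.Icc 1 (N+1) := by rw [Finset.mem_Icc]; omega
      rw [← hh.2.2] at hxmem
      simp only [Finset.mem_biUnion, Finset.mem_univ, true_and] at hxmem
      obtain ⟨i, hxi⟩ := hxmem
      have hmax' : ∀ y ∈ leafSet (h i), y ≠ x → y < x := by
        intro y hy hne
        have := hh.leafSet_subset i hy
        rw [Finset.mem_Icc] at this
        omega
      have hxother : ∀ j, j ≠ i → x ∉ leafSet (h j) := fun j hj hmem =>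
        Finset.disjoint_left.1 (hh.2.1 j i hj) hmem hxi
      by_cases hsing : leafSet (h i) = {x}
      · -- second kind
        have hleaf : h i = leaf x := eq_leaf_of_leafSet_singleton (hh.1 i).1 hsing
        have hg : IsForest (Finset.Icc 1 N) (fun a => h (i.succAbove a)) := by
          refine ⟨fun a => hh.1 _, fun a b hab => hh.2.1 _ _
            (fun hEq => hab (Fin.succAbove_right_injective hEq)), ?_⟩
          ext z
          simp only [Finset.mem_biUnion, Finset.mem_univ, true_and]
          constructor
          · rintro ⟨a, hz⟩
            have hzI := hh.leafSet_subset (i.succAbove a) hz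
            have hzne : z ≠ x := fun hEq => hxother _ (Fin.succAbove_ne i a) (hEq ▸ hz)
            rw [Finset.mem_Icc] at hzI ⊢
            omega
          · intro hz
            have hz2 : z ∈ Finset.Icc 1 (N+1) := mem_Icc_succ_of_mem hz
            rw [← hh.2.2] at hz2
            simp only [Finset.mem_biUnion, Finset.mem_univ, true_and] at hz2
            obtain ⟨j, hj⟩ := hz2
            have hjne : j ≠ i := by
              rintro rfl
              rw [hsing, Finset.mem_singleton] at hj
              rw [Finset.mem_Icc] at hz
              omega
            obtain ⟨a, rfl⟩ := Fin.exists_succAbove_eq hjne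
            exact ⟨a, hj⟩
        refine ⟨Sum.inr ⟨i, ⟨fun a => h (i.succAbove a), hg⟩⟩, ?_⟩
        apply Subtype.ext
        funext j
        show Fin.insertNth (α := fun _ => PTree) i (leaf x) (fun a => h (i.succAbove a)) j = h j
        rcases eq_or_ne j i with rfl | hj
        · rw [Fin.insertNth_apply_same, hleaf]
        · obtain ⟨a, rfl⟩ := Fin.exists_succAbove_eq hj
          rw [Fin.insertNth_apply_succAbove]
      · -- first kind
        have hP := isPhylo_prune (hh.1 i).1 (hh.1 i).2 hmax' hxi hsing
        have hCn := canonical_prune (hh.1 i).1 (hh.1 i).2 hmax' hxi hsing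
        have hLS := leafSet_prune (hh.1 i).1 (hh.1 i).2 hmax' hxi hsing
        have hf' : IsForest (Finset.Icc 1 N) (Function.update h i (prune x (h i))) := by
          refine ⟨?_, ?_, ?_⟩
          · intro j
            rcases eq_or_ne j i with rfl | hj
            · rw [Function.update_self]; exact ⟨hP, hCn⟩
            · rw [Function.update_of_ne hj]; exact hh.1 j
          · intro a b hab
            rcases eq_or_ne a i with rfl | ha
            · rw [Function.update_self, Function.update_of_ne (Ne.symm hab), hLS]
              exact Finset.disjoint_of_subset_left (Finset.erase_subset _ _) (hh.2.1 a b hab)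
            · rcases eq_or_ne b i with rfl | hb
              · rw [Function.update_self, Function.update_of_ne ha, hLS]
                exact Finset.disjoint_of_subset_right (Finset.erase_subset _ _) (hh.2.1 a b hab)
              · rw [Function.update_of_ne ha, Function.update_of_ne hb]
                exact hh.2.1 a b hab
          · ext z
            simp only [Finset.mem_biUnion, Finset.mem_univ, true_and]
            constructor
            · rintro ⟨j, hz⟩
              rcases eq_or_ne j i with rfl | hj
              · rw [Function.update_self, hLS, Finset.mem_erase] at hz
                have := hh.leafSet_subset j hz.2
                rw [Finset.mem_Icc] at this ⊢
                have := hz.1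
                omega
              · rw [Function.update_of_ne hj] at hz
                have := hh.leafSet_subset j hz
                have hzne : z ≠ x := fun hEq => hxother j hj (hEq ▸ hz)
                rw [Finset.mem_Icc] at this ⊢
                omega
            · intro hz
              have hz2 : z ∈ Finset.Icc 1 (N+1) := mem_Icc_succ_of_mem hz
              rw [← hh.2.2] at hz2
              simp only [Finset.mem_biUnion, Finset.mem_univ, true_and] at hz2
              obtain ⟨j, hj⟩ := hz2
              have hzne : z ≠ x := by
                rw [Finset.mem_Icc] at hz
                omega
              rcases eq_or_ne j i with rfl | hne
              · exact ⟨j, by rw [Function.update_self, hLS]; exact Finset.mem_erase.2 ⟨hzne, hj⟩⟩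
              · exact ⟨j, by rw [Function.update_of_ne hne]; exact hj⟩
        have hfi' : Function.update h i (prune x (h i)) i = prune x (h i) :=
          Function.update_self _ _ _
        have hC : sib x (h i) ∈ clades (Function.update h i (prune x (h i)) i) := by
          rw [hfi']
          exact sib_mem_clades_prune (hh.1 i).1 (hh.1 i).2 hmax' hxi hsing
        refine ⟨Sum.inl ⟨⟨⟨Function.update h i (prune x (h i)), hf'⟩, i⟩, ⟨sib x (h i), hC⟩⟩, ?_⟩
        apply Subtype.ext
        show Function.update (Function.update h i (prune x (h i))) i
          (graft x (sib x (h i)) (Function.update h i (prune x (h i)) i)) = h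
        rw [hfi', graft_sib_prune (hh.1 i).1 (hh.1 i).2 hmax' hxi hsing,
          Function.update_idem, Function.update_eq_self]
  -- counting
  have hcount := Nat.card_eq_of_bijective Φ hbij
  have hcardB : Nat.card Bt = F (Finset.Icc 1 N) k * (k+1) := by
    rw [Nat.card_prod, Nat.card_eq_fintype_card (α := Fin (k+1)), Fintype.card_fin, F]
    ring
  have hcardA : Nat.card A = F (Finset.Icc 1 N) (k+1) * (2*N - (k+1)) := by
    haveI := Fintype.ofFinite {f : Fin (k+1) → PTree // IsForest (Finset.Icc 1 N) f}
    rw [nat_card_sigma]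
    have hfib : ∀ (p : {f : Fin (k+1) → PTree // IsForest (Finset.Icc 1 N) f} × Fin (k+1)),
        Nat.card {C : Finset ℕ // C ∈ clades (p.1.1 p.2)} = 2 * numLeaves (p.1.1 p.2) - 1 := by
      intro p
      rw [Nat.card_eq_finsetCard, card_clades (p.1.2.1 p.2).1]
    rw [Finset.sum_congr rfl (fun p _ => hfib p), Fintype.sum_prod_type]
    have hinner : ∀ (f : {f : Fin (k+1) → PTree // IsForest (Finset.Icc 1 N) f}),
        ∑ i, (2 * numLeaves (f.1 i) - 1) = 2*N - (k+1) := by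
      intro f
      have hsum : ∑ i, numLeaves (f.1 i) = N := by
        have hbu := Finset.card_biUnion
          (s := (Finset.univ : Finset (Fin (k+1)))) (t := fun i => leafSet (f.1 i))
          (fun i _ j _ hij => f.2.2.1 i j hij)
        rw [f.2.2.2, Nat.card_Icc] at hbu
        have hcc : ∑ i, (leafSet (f.1 i)).card = ∑ i, numLeaves (f.1 i) :=
          Finset.sum_congr rfl (fun i _ => card_leafSet _ (f.2.1 i).1)
        rw [hcc] at hbu
        omega
      have h2 : ∑ i, (2 * numLeaves (f.1 i) - 1) + (k+1) = ∑ i, 2 * numLeaves (f.1 i) := by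
        have he : ∀ i : Fin (k+1), 2 * numLeaves (f.1 i) - 1 + 1 = 2 * numLeaves (f.1 i) :=
          fun i => by have := one_le_numLeaves (f.1 i); omega
        calc ∑ i, (2 * numLeaves (f.1 i) - 1) + (k+1)
            = ∑ i, (2 * numLeaves (f.1 i) - 1 + 1) := by
              rw [Finset.sum_add_distrib, Finset.sum_const, Finset.card_univ, Fintype.card_fin,
                smul_eq_mul, mul_one]
          _ = ∑ i, 2 * numLeaves (f.1 i) := Finset.sum_congr rfl (fun i _ => he i)
      have h3 : ∑ i, 2 * numLeaves (f.1 i) = 2 * N := by rw [← Finset.mul_sum, hsum]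
      omega
    rw [Finset.sum_congr rfl (fun f _ => hinner f), Finset.sum_const, Finset.card_univ,
      ← Nat.card_eq_fintype_card, smul_eq_mul, F]
  rw [F, ← hcount, Nat.card_sum, hcardA, hcardB]

lemma F_formula : ∀ n m : ℕ, 1 ≤ m → m ≤ n →
    F (Finset.Icc 1 n) m * (Nat.factorial (n - m) * 2 ^ (n - m)) =
    Nat.factorial (2 * n - m - 1) * m := by
  intro n
  induction n with
  | zero => intro m hm hmn; omega
  | succ N ih =>
    intro m hm hmn
    by_cases hEq : m = N + 1
    · subst hEq
      rw [F_base]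
      have h0 : N + 1 - (N + 1) = 0 := by omega
      have h1 : 2 * (N + 1) - (N + 1) - 1 = N := by omega
      rw [h0, h1]
      simp only [Nat.factorial_zero, pow_zero, mul_one, one_mul]
      rw [Nat.factorial_succ]
      ring
    · have hmN : m ≤ N := by omega
      obtain ⟨k, rfl⟩ : ∃ k, m = k + 1 := ⟨m - 1, by omega⟩
      rw [F_rec N k hmN]
      set e := N - (k+1) with he
      have hN : N = k + 1 + e := by omega
      have ih1 : F (Finset.Icc 1 N) (k+1) * (Nat.factorial e * 2 ^ e)
          = Nat.factorial (k + 2*e) * (k+1) := by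
        have := ih (k+1) hm hmN
        have h1 : N - (k+1) = e := by omega
        have h2 : 2*N - (k+1) - 1 = k + 2*e := by omega
        rw [h1, h2] at this
        exact this
      have hB : F (Finset.Icc 1 N) k * (Nat.factorial (e+1) * 2 ^ (e+1))
          = Nat.factorial (k + 2*e + 1) * k := by
        rcases Nat.eq_zero_or_pos k with rfl | hk
        · rw [F_zero ⟨1, by rw [Finset.mem_Icc]; omega⟩]
          simp
        · have := ih k hk (by omega)
          have h1 : N - k = e + 1 := by omega
          have h2 : 2*N - k - 1 = k + 2*e + 1 := by omega
          rw [h1, h2] at this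
          exact this
      have hg1 : N + 1 - (k + 1) = e + 1 := by omega
      have hg2 : 2 * (N + 1) - (k + 1) - 1 = k + 2*e + 2 := by omega
      have hg3 : 2 * N - (k + 1) = k + 2*e + 1 := by omega
      rw [hg1, hg2, hg3]
      have hf1 : Nat.factorial (e+1) = (e+1) * Nat.factorial e := Nat.factorial_succ e
      have hf2 : Nat.factorial (k + 2*e + 1) = (k + 2*e + 1) * Nat.factorial (k + 2*e) :=
        Nat.factorial_succ _
      have hf3 : Nat.factorial (k + 2*e + 2) = (k + 2*e + 2) * Nat.factorial (k + 2*e + 1) :=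
        Nat.factorial_succ _
      calc (F (Finset.Icc 1 N) (k+1) * (k + 2*e + 1) + F (Finset.Icc 1 N) k * (k+1)) *
            (Nat.factorial (e+1) * 2 ^ (e+1))
          = (k + 2*e + 1) * (e+1) * 2 *
              (F (Finset.Icc 1 N) (k+1) * (Nat.factorial e * 2 ^ e)) +
            (F (Finset.Icc 1 N) k * (Nat.factorial (e+1) * 2 ^ (e+1))) * (k+1) := by
            rw [hf1]; ring
        _ = (k + 2*e + 1) * (e+1) * 2 * (Nat.factorial (k + 2*e) * (k+1)) +
            (Nat.factorial (k + 2*e + 1) * k) * (k+1) := by rw [ih1, hB]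
        _ = Nat.factorial (k + 2*e + 2) * (k+1) := by rw [hf3, hf2]; ring

end PTree

open PTree in
/-- For all n ≥ m ≥ 1, the number of ordered m-forests on {1,…,n} equals
(2n−m−1)!·m / ((n−m)!·2^(n−m)). -/
theorem numOrderedForests (n m : ℕ) (hm : 1 ≤ m) (hmn : m ≤ n) :
    Nat.card {f : Fin m → PTree //
        (∀ i, isPhylo (f i) ∧ canonical (f i)) ∧
        (∀ i j, i ≠ j → Disjoint (leafSet (f i)) (leafSet (f j))) ∧
        Finset.univ.biUnion (fun i => leafSet (f i)) = Finset.Icc 1 n} *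
      (Nat.factorial (n - m) * 2 ^ (n - m)) =
    Nat.factorial (2 * n - m - 1) * m :=
  F_formula n m hm hmn
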